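/- Every subspace X ⊆ R^n is (n/(2Δ(X)^2), 1/(4Δ(X)))-spread, where Δ(X) is the distortion of X. -/

import Mathlib

/-- Every subspace `X ⊆ ℝⁿ` with distortion at most `Δ` is
`(n/(2Δ²), 1/(4Δ))`-spread. -/
theorem distortion_implies_spread (n : ℕ) (X : Submodule ℝ (Fin n → ℝ)) (Δ : ℝ)
    (hΔ1 : 1 ≤ Δ)
    (hdist : ∀ x ∈ X, x ≠ 0 →
      Real.sqrt n * Real.sqrt (∑ i, x i ^ 2) ≤ Δ * ∑ i, |x i|) :
    ∀ x ∈ X, ∀ S : Finset (Fin n), (S.card : ℝ) ≤ (n : ℝ) / (2 * Δ ^ 2) →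
      (1 / (4 * Δ)) * Real.sqrt (∑ i, x i ^ 2) ≤ Real.sqrt (∑ i ∈ Sᶜ, x i ^ 2) := by
  intro x hx S hS
  have hΔ0 : (0:ℝ) < Δ := lt_of_lt_of_le one_pos hΔ1
  by_cases hx0 : x = 0
  · simp [hx0]
  · have H := hdist x hx hx0
    obtain ⟨a, ha⟩ : ∃ a, a = Real.sqrt (∑ i, x i ^ 2) := ⟨_, rfl⟩
    obtain ⟨b, hb⟩ : ∃ b, b = Real.sqrt (∑ i ∈ Sᶜ, x i ^ 2) := ⟨_, rfl⟩
    obtain ⟨u, hu⟩ : ∃ u, u = Real.sqrt (n : ℝ) := ⟨_, rfl⟩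
    obtain ⟨s, hsdef⟩ : ∃ s, s = ∑ i ∈ S, |x i| := ⟨_, rfl⟩
    obtain ⟨t, htdef⟩ : ∃ t, t = ∑ i ∈ Sᶜ, |x i| := ⟨_, rfl⟩
    rw [← ha, ← hu] at H
    rw [← ha, ← hb]
    have ha0 : 0 ≤ a := ha ▸ Real.sqrt_nonneg _
    have hb0 : 0 ≤ b := hb ▸ Real.sqrt_nonneg _
    have hu0 : 0 ≤ u := hu ▸ Real.sqrt_nonneg _
    have hs0 : 0 ≤ s := hsdef ▸ Finset.sum_nonneg fun i _ => abs_nonneg _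
    have ht0 : 0 ≤ t := htdef ▸ Finset.sum_nonneg fun i _ => abs_nonneg _
    have ha2 : a ^ 2 = ∑ i, x i ^ 2 := by rw [ha]; exact Real.sq_sqrt (by positivity)
    have hb2 : b ^ 2 = ∑ i ∈ Sᶜ, x i ^ 2 := by rw [hb]; exact Real.sq_sqrt (by positivity)
    have hu2 : u ^ 2 = (n : ℝ) := by rw [hu]; exact Real.sq_sqrt (by positivity)
    have hapos : 0 < a := by
      have : ∃ i, x i ≠ 0 := by
        by_contra h
        push_neg at h
        exact hx0 (funext h)
      obtain ⟨i, hi⟩ := this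
      have : 0 < ∑ j, x j ^ 2 :=
        Finset.sum_pos' (fun j _ => sq_nonneg _) ⟨i, Finset.mem_univ i, by positivity⟩
      rw [ha]
      exact Real.sqrt_pos.mpr this
    have hupos : 0 < u := by
      have hn : 0 < n := by
        rcases Nat.eq_zero_or_pos n with h | h
        · exfalso; apply hx0; funext i; exact absurd i.2 (by omega)
        · exact h
      rw [hu]
      exact Real.sqrt_pos.mpr (by exact_mod_cast hn)
    have hsplit : (∑ i, |x i|) = s + t := by
      rw [hsdef, htdef]; exact (Finset.sum_add_sum_compl S _).symm
    rw [hsplit] at H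
    have hCS : s ^ 2 ≤ (S.card : ℝ) * ∑ i ∈ S, |x i| ^ 2 := by
      rw [hsdef]
      exact_mod_cast sq_sum_le_card_mul_sum_sq (s := S) (f := fun i => |x i|)
    have hsub : ∑ i ∈ S, |x i| ^ 2 ≤ ∑ i, x i ^ 2 := by
      simp only [sq_abs]
      exact Finset.sum_le_sum_of_subset_of_nonneg (Finset.subset_univ S)
        (fun i _ _ => sq_nonneg _)
    have hsumnn : (0:ℝ) ≤ ∑ i ∈ S, |x i| ^ 2 :=
      Finset.sum_nonneg fun i _ => sq_nonneg _
    have h2 : 2 * Δ ^ 2 * s ^ 2 ≤ u ^ 2 * a ^ 2 := by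
      have hkey : s ^ 2 ≤ ((n : ℝ) / (2 * Δ ^ 2)) * ∑ i, x i ^ 2 := by
        refine hCS.trans (mul_le_mul hS hsub hsumnn ?_)
        exact le_trans (Nat.cast_nonneg _) hS
      rw [hu2, ha2]
      have h2Δ : (0:ℝ) < 2 * Δ ^ 2 := by positivity
      calc 2 * Δ ^ 2 * s ^ 2
          ≤ 2 * Δ ^ 2 * (((n : ℝ) / (2 * Δ ^ 2)) * ∑ i, x i ^ 2) :=
            mul_le_mul_of_nonneg_left hkey h2Δ.le
        _ = (n : ℝ) * ∑ i, x i ^ 2 := by field_simp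
    have hCS2 : t ^ 2 ≤ (Sᶜ.card : ℝ) * ∑ i ∈ Sᶜ, |x i| ^ 2 := by
      rw [htdef]
      exact_mod_cast sq_sum_le_card_mul_sum_sq (s := Sᶜ) (f := fun i => |x i|)
    have h3 : t ^ 2 ≤ u ^ 2 * b ^ 2 := by
      rw [hu2, hb2]
      refine hCS2.trans ?_
      have hcard : (Sᶜ.card : ℝ) ≤ (n : ℝ) := by
        have := Finset.card_le_card (Finset.subset_univ Sᶜ)
        simpa using (Nat.cast_le (α := ℝ)).mpr this
      simp only [sq_abs]
      exact mul_le_mul_of_nonneg_right hcard (Finset.sum_nonneg fun i _ => sq_nonneg _)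
    have ht_le : t ≤ u * b := by
      nlinarith [sq_nonneg (t - u * b), sq_nonneg (t + u * b), mul_nonneg hu0 hb0]
    have hab : a ≤ 4 * Δ * b := by
      by_contra hcon
      push_neg at hcon
      have h4 : u * (4 * Δ * b) ≤ u * a := mul_le_mul_of_nonneg_left hcon.le hu0
      have h4' : Δ * t ≤ Δ * (u * b) := mul_le_mul_of_nonneg_left ht_le hΔ0.le
      have h5 : 3 / 4 * (u * a) ≤ Δ * s := by nlinarith [H, h4, h4']
      have h6 : (3 / 4 * (u * a)) ^ 2 ≤ (Δ * s) ^ 2 :=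
        pow_le_pow_left₀ (by positivity) h5 2
      have h7 : 0 < u ^ 2 * a ^ 2 :=
        mul_pos (pow_pos hupos 2) (pow_pos hapos 2)
      have h8 : 9 / 16 * (u ^ 2 * a ^ 2) ≤ Δ ^ 2 * s ^ 2 := by
        calc 9 / 16 * (u ^ 2 * a ^ 2) = (3 / 4 * (u * a)) ^ 2 := by ring
          _ ≤ (Δ * s) ^ 2 := h6
          _ = Δ ^ 2 * s ^ 2 := by ring
      linarith
    rw [one_div, inv_mul_le_iff₀ (by positivity)]
    linarith
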